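/- Let L_+ be the Laplacian of a connected weighted graph on n nodes with positive edge weights, let i ≠ j, let e_{ij} be the vector with 1 in position i, −1 in position j, and 0 elsewhere, and let r_{ij} = e_{ij}^T L_+^† e_{ij} be the effective resistance between i and j. Define L = L_+ − k e_{ij} e_{ij}^T for k > 0. If k < r_{ij}^{-1}, then L is positive semidefinite with dim ker L = 1 (kernel spanned by the all-ones vector), and L is positive definite on the orthogonal complement of the all-ones vector. -/

import Mathlib

open Matrix

/-- If `L = L₊ - k e_{ij} e_{ij}ᵀ` with `L₊` a connected-graph Laplacian
(positive semidefinite, kernel spanned by the all-ones vector) and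
`0 < k < r_{ij}⁻¹` where `r_{ij}` is the effective resistance between `i` and
`j` (`v = L₊† e_{ij}`, i.e. `L₊ v = e_{ij}`, `v ⟂ 1`, `r_{ij} = v_i - v_j`),
then `L` is positive semidefinite, its kernel is spanned by the all-ones
vector (so `dim ker L = 1`), and `L` is positive definite on `1ⁿ^⊥`. -/
theorem signed_laplacian_subcritical_gain
    (n : ℕ) (Lp : Matrix (Fin n) (Fin n) ℝ) (i j : Fin n) (hij : i ≠ j)
    (hsymm : Lp.IsSymm) (hpsd : Lp.PosSemidef)
    (hker : ∀ w : Fin n → ℝ, Lp *ᵥ w = 0 ↔ ∃ c : ℝ, w = fun _ => c)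
    (eij : Fin n → ℝ)
    (heij : eij = fun l => if l = i then (1 : ℝ) else if l = j then -1 else 0)
    (v : Fin n → ℝ) (hv : Lp *ᵥ v = eij) (hvperp : v ⬝ᵥ (fun _ => 1) = 0)
    (rij : ℝ) (hrij : rij = v i - v j) (hrpos : 0 < rij)
    (k : ℝ) (hk : 0 < k) (hklt : k < rij⁻¹)
    (L : Matrix (Fin n) (Fin n) ℝ)
    (hL : L = Lp - k • vecMulVec eij eij) :
    L.PosSemidef ∧
    (∀ w : Fin n → ℝ, L *ᵥ w = 0 ↔ ∃ c : ℝ, w = fun _ => c) ∧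
    Module.finrank ℝ ↥(LinearMap.ker (Matrix.toLin' L)) = 1 ∧
    (∀ w : Fin n → ℝ, w ⬝ᵥ (fun _ => 1) = 0 → w ≠ 0 → 0 < w ⬝ᵥ (L *ᵥ w)) := by
  have hkr : k * rij < 1 := by
    nlinarith [mul_inv_cancel₀ hrpos.ne', mul_lt_mul_of_pos_right hklt hrpos]
  -- eij dot product computes a difference of coordinates
  have hedot : ∀ w : Fin n → ℝ, eij ⬝ᵥ w = w i - w j := by
    intro w
    subst heij
    simp only [dotProduct, ite_mul, one_mul, neg_mul, zero_mul]
    have : ∀ x : Fin n, (if x = i then w x else if x = j then -w x else 0)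
        = (if x = i then w i else 0) + (if x = j then -w j else 0) := by
      intro x
      by_cases h1 : x = i <;> by_cases h2 : x = j <;> simp_all
    simp [this, Finset.sum_add_distrib, Finset.sum_ite_eq', hij, sub_eq_add_neg]
  -- e ⬝ w = v ⬝ Lp w
  have hcross : ∀ w : Fin n → ℝ, eij ⬝ᵥ w = v ⬝ᵥ (Lp *ᵥ w) := by
    intro w
    rw [← hv, dotProduct_mulVec, ← mulVec_transpose, hsymm.eq, dotProduct_comm,
      dotProduct_mulVec, ← mulVec_transpose, hsymm.eq]
  have hr : v ⬝ᵥ (Lp *ᵥ v) = rij := by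
    rw [← hcross v, hedot v, hrij]
  have hqnn : ∀ w : Fin n → ℝ, 0 ≤ w ⬝ᵥ (Lp *ᵥ w) := by
    intro w
    simpa using hpsd.dotProduct_mulVec_nonneg w
  -- Cauchy-Schwarz for the Lp-semi-inner-product
  have hCS : ∀ w : Fin n → ℝ, (eij ⬝ᵥ w)^2 ≤ rij * (w ⬝ᵥ (Lp *ᵥ w)) := by
    intro w
    set b := eij ⬝ᵥ w with hb
    have h0 := hqnn (rij • w - b • v)
    have h1 : w ⬝ᵥ (Lp *ᵥ v) = b := by
      rw [hv, dotProduct_comm, hb]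
    have h2 : v ⬝ᵥ (Lp *ᵥ w) = b := (hcross w).symm
    have hexp : (rij • w - b • v) ⬝ᵥ (Lp *ᵥ (rij • w - b • v))
        = rij^2 * (w ⬝ᵥ (Lp *ᵥ w)) - rij * b^2 := by
      simp only [mulVec_sub, mulVec_smul, dotProduct_sub, dotProduct_smul,
        smul_dotProduct, sub_dotProduct, smul_eq_mul]
      rw [h1, h2, hr]
      ring
    rw [hexp] at h0
    nlinarith
  -- rank-one update acts as scaled projection
  have hvmv : ∀ w : Fin n → ℝ, (vecMulVec eij eij) *ᵥ w = (eij ⬝ᵥ w) • eij := by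
    intro w
    ext x
    simp only [mulVec, dotProduct, vecMulVec_apply, Pi.smul_apply, smul_eq_mul,
      Finset.sum_mul]
    exact Finset.sum_congr rfl fun l _ => by ring
  -- quadratic form of L
  have hq : ∀ w : Fin n → ℝ, w ⬝ᵥ (L *ᵥ w)
      = w ⬝ᵥ (Lp *ᵥ w) - k * (eij ⬝ᵥ w)^2 := by
    intro w
    rw [hL]
    simp only [sub_mulVec, smul_mulVec, dotProduct_sub, dotProduct_smul,
      smul_eq_mul, hvmv]
    rw [dotProduct_comm w eij]
    ring
  have hLnn : ∀ w : Fin n → ℝ, (1 - k * rij) * (w ⬝ᵥ (Lp *ᵥ w)) ≤ w ⬝ᵥ (L *ᵥ w) := by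
    intro w
    rw [hq w]
    nlinarith [hCS w, hqnn w]
  have hLnn0 : ∀ w : Fin n → ℝ, 0 ≤ w ⬝ᵥ (L *ᵥ w) := by
    intro w
    nlinarith [hLnn w, hqnn w]
  -- if the quadratic form of L vanishes, then w is constant
  have hzero : ∀ w : Fin n → ℝ, w ⬝ᵥ (L *ᵥ w) ≤ 0 → ∃ c : ℝ, w = fun _ => c := by
    intro w hw
    have hq0 : w ⬝ᵥ (Lp *ᵥ w) = 0 := by
      nlinarith [hLnn w, hqnn w]
    have hLpw : Lp *ᵥ w = 0 := by
      have := (hpsd.dotProduct_mulVec_zero_iff w).mp (by simpa using hq0)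
      exact this
    exact (hker w).mp hLpw
  -- symmetry of L
  have hLherm : L.IsHermitian := by
    rw [hL]
    ext x y
    simp only [conjTranspose_apply, Matrix.sub_apply, Matrix.smul_apply, vecMulVec_apply, star_sub,
      star_mul', RCLike.star_def, conj_trivial, smul_eq_mul]
    rw [← hsymm.apply x y]
    ring
  have hpsdL : L.PosSemidef := by
    refine Matrix.PosSemidef.of_dotProduct_mulVec_nonneg hLherm fun w => ?_
    simpa using hLnn0 w
  -- kernel characterization
  have hkerL : ∀ w : Fin n → ℝ, L *ᵥ w = 0 ↔ ∃ c : ℝ, w = fun _ => c := by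
    intro w
    constructor
    · intro hw
      apply hzero
      rw [hw, dotProduct_zero]
    · rintro ⟨c, rfl⟩
      have h1 : Lp *ᵥ (fun _ => c) = 0 := (hker _).mpr ⟨c, rfl⟩
      have h2 : eij ⬝ᵥ (fun _ => c) = 0 := by rw [hedot]; ring
      rw [hL, sub_mulVec, smul_mulVec, hvmv, h1, h2]
      simp
  refine ⟨hpsdL, hkerL, ?_, ?_⟩
  · -- finrank of kernel
    have hone : (fun _ => (1:ℝ)) ≠ (0 : Fin n → ℝ) := by
      intro h
      have := congrFun h i
      simp at this
    have hspan : LinearMap.ker (Matrix.toLin' L) = ℝ ∙ (fun _ => (1:ℝ)) := by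
      ext w
      rw [LinearMap.mem_ker, Matrix.toLin'_apply, Submodule.mem_span_singleton, hkerL w]
      constructor
      · rintro ⟨c, rfl⟩
        exact ⟨c, by funext x; simp⟩
      · rintro ⟨a, rfl⟩
        exact ⟨a, by funext x; simp⟩
    rw [hspan]
    exact finrank_span_singleton hone
  · -- positive definiteness on the orthogonal complement of ones
    intro w hperp hne
    rcases lt_or_eq_of_le (hLnn0 w) with h | h
    · exact h
    · exfalso
      obtain ⟨c, rfl⟩ := hzero w (le_of_eq h.symm)
      have hsum : (fun _ : Fin n => c) ⬝ᵥ (fun _ => (1:ℝ)) = n * c := by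
        simp [dotProduct, Finset.sum_const, mul_comm]
      rw [hperp] at hsum
      have hc : c ≠ 0 := by
        intro hc
        apply hne
        funext x
        simp [hc]
      have hn : (n : ℝ) ≠ 0 := by
        have : 0 < n := Fin.pos i
        exact_mod_cast this.ne'
      exact hc ((mul_eq_zero.mp hsum.symm).resolve_left hn)
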